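/- Let q > 1 be a positive algebraic number, b ≥ 3 an integer, and 1 ≤ a < b/2 with gcd(a,b) = 1. Then the number ((q−1)/log q)·π·cot(πa/b) + (2q−3)·(1/2 − a/b) is transcendental. -/

import Mathlib

section Aux

variable {A : Type*} [Field A] [Algebra ℚ A]

lemma alg_add' {x y : A} (hx : IsAlgebraic ℚ x) (hy : IsAlgebraic ℚ y) :
    IsAlgebraic ℚ (x + y) :=
  isAlgebraic_iff_isIntegral.mpr
    ((isAlgebraic_iff_isIntegral.mp hx).add (isAlgebraic_iff_isIntegral.mp hy))

lemma alg_mul' {x y : A} (hx : IsAlgebraic ℚ x) (hy : IsAlgebraic ℚ y) :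
    IsAlgebraic ℚ (x * y) :=
  isAlgebraic_iff_isIntegral.mpr
    ((isAlgebraic_iff_isIntegral.mp hx).mul (isAlgebraic_iff_isIntegral.mp hy))

lemma alg_sub' {x y : A} (hx : IsAlgebraic ℚ x) (hy : IsAlgebraic ℚ y) :
    IsAlgebraic ℚ (x - y) :=
  isAlgebraic_iff_isIntegral.mpr
    ((isAlgebraic_iff_isIntegral.mp hx).sub (isAlgebraic_iff_isIntegral.mp hy))

lemma alg_neg' {x : A} (hx : IsAlgebraic ℚ x) : IsAlgebraic ℚ (-x) :=
  isAlgebraic_iff_isIntegral.mpr (isAlgebraic_iff_isIntegral.mp hx).neg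

lemma alg_div' {x y : A} (hx : IsAlgebraic ℚ x) (hy : IsAlgebraic ℚ y) :
    IsAlgebraic ℚ (x / y) := by
  rw [div_eq_mul_inv]; exact alg_mul' hx hy.inv

end Aux

open Complex Polynomial in
lemma exp_alg (a b : ℕ) (hb : 0 < b) :
    IsAlgebraic ℚ (Complex.exp ((Real.pi * a / b : ℝ) * Complex.I)) := by
  set z := Complex.exp ((Real.pi * a / b : ℝ) * Complex.I) with hz
  have hzpow : z ^ (2 * b) = 1 := by
    rw [hz, ← Complex.exp_nat_mul]
    have : ((2 * b : ℕ) : ℂ) * (((Real.pi * a / b : ℝ) : ℂ) * Complex.I)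
        = (a : ℕ) * (2 * (Real.pi : ℂ) * Complex.I) := by
      push_cast
      have : (b : ℂ) ≠ 0 := Nat.cast_ne_zero.mpr hb.ne'
      field_simp
    rw [this]
    exact Complex.exp_nat_mul_two_pi_mul_I a
  have : IsIntegral ℚ z := by
    refine ⟨X ^ (2 * b) - C 1, Polynomial.monic_X_pow_sub_C 1 (by omega), ?_⟩
    simp [hzpow]
  exact this.isAlgebraic

open Complex Polynomial in
lemma cot_alg (a b : ℕ) (hb : 0 < b) :
    IsAlgebraic ℚ (Real.cot (Real.pi * a / b)) := by
  have key : IsAlgebraic ℚ ((Real.cot (Real.pi * a / b) : ℝ) : ℂ) := by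
    rw [Complex.ofReal_cot]
    set w : ℂ := ((Real.pi * a / b : ℝ) : ℂ) with hw
    set z := Complex.exp (w * Complex.I) with hz
    have hzalg : IsAlgebraic ℚ z := exp_alg a b hb
    have hzinv : IsAlgebraic ℚ (Complex.exp (-w * Complex.I)) := by
      have : Complex.exp (-w * Complex.I) = z⁻¹ := by
        rw [hz, ← Complex.exp_neg]; ring_nf
      rw [this]; exact hzalg.inv
    have hI : IsAlgebraic ℚ Complex.I := by
      refine IsIntegral.isAlgebraic ⟨X ^ 2 + C 1, ?_, ?_⟩
      · exact Polynomial.monic_X_pow_add_C 1 (by norm_num)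
      · simp [Complex.I_sq]
    have h2 : IsAlgebraic ℚ (2 : ℂ) := isAlgebraic_nat 2
    rw [Complex.cot, Complex.cos, Complex.sin]
    exact alg_div' (alg_div' (alg_add' hzalg hzinv) h2)
      (alg_div' (alg_mul' (alg_sub' hzinv hzalg) hI) h2)
  exact (isAlgebraic_algebraMap_iff Complex.ofReal_injective).mp key

theorem stmt_8 (q : ℝ) (hq : 1 < q) (hqalg : IsAlgebraic ℚ q)
    (a b : ℕ) (hb : 3 ≤ b) (ha1 : 1 ≤ a) (ha2 : 2 * a < b) (hab : Nat.gcd a b = 1)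
    (hBaker : ∀ (c₀ c₁ α : ℝ), IsAlgebraic ℚ c₀ → c₀ ≠ 0 → IsAlgebraic ℚ c₁ →
      0 < α → IsAlgebraic ℚ α →
      Transcendental ℚ (c₀ * Real.pi + c₁ * Real.log α)) :
    Transcendental ℚ
      ((q - 1) / Real.log q * Real.pi * Real.cot (Real.pi * a / b)
        + (2 * q - 3) * (1 / 2 - (a : ℝ) / b)) := by
  intro h
  set c := Real.cot (Real.pi * a / b) with hc
  have hb0 : (0 : ℝ) < b := by positivity
  have ha0 : (0 : ℝ) < a := by exact_mod_cast ha1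
  have hθ0 : 0 < Real.pi * a / b := by positivity
  have hθlt : Real.pi * a / b < Real.pi / 2 := by
    rw [div_lt_div_iff₀ hb0 (by norm_num)]
    have : (2 : ℝ) * a < b := by exact_mod_cast ha2
    calc Real.pi * a * 2 = Real.pi * (2 * a) := by ring
    _ < Real.pi * b := by
        exact mul_lt_mul_of_pos_left this Real.pi_pos
    _ = Real.pi * b := rfl
  have hcpos : 0 < c := by
    rw [hc, Real.cot_eq_cos_div_sin]
    apply div_pos
    · exact Real.cos_pos_of_mem_Ioo ⟨by linarith [Real.pi_pos], hθlt⟩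
    · exact Real.sin_pos_of_pos_of_lt_pi hθ0 (by linarith [Real.pi_pos])
  have hcalg : IsAlgebraic ℚ c := cot_alg a b (by omega)
  have hlogpos : 0 < Real.log q := Real.log_pos hq
  -- r is algebraic
  have hna : IsAlgebraic ℚ ((a : ℝ)) := isAlgebraic_nat a
  have hnb : IsAlgebraic ℚ ((b : ℝ)) := isAlgebraic_nat b
  have hr : IsAlgebraic ℚ ((2 * q - 3) * (1 / 2 - (a : ℝ) / b)) := by
    refine alg_mul' (alg_sub' (alg_mul' (isAlgebraic_nat 2) hqalg) (isAlgebraic_nat 3))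
      (alg_sub' (alg_div' isAlgebraic_one (isAlgebraic_nat 2)) (alg_div' hna hnb))
  set β := (q - 1) / Real.log q * Real.pi * c with hβ
  have hβalg : IsAlgebraic ℚ β := by
    have := alg_sub' h hr
    rw [add_sub_cancel_right] at this
    exact this
  have hkey : (q - 1) * c * Real.pi + (-β) * Real.log q = 0 := by
    rw [hβ]
    field_simp
    ring
  have := hBaker ((q - 1) * c) (-β) q (alg_mul' (alg_sub' hqalg isAlgebraic_one) hcalg)
    (ne_of_gt (mul_pos (by linarith) hcpos)) (alg_neg' hβalg) (by linarith) hqalg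
  rw [hkey] at this
  exact this isAlgebraic_zero
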